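/- (Schwarz–Pick inequality on a distinguished variety, radial-limit case.) Let a = (a₁,a₂) and b = (b₁,b₂) be points of the open bidisk 𝔻². Then there exists a distinguished variety V ∩ 𝔻² (with V = Z(q) the zero set of a polynomial q ∈ ℂ[z,w]) such that the following holds: for every function f : ℂ² → ℂ holomorphic on 𝔻² for which there is a sequence (rₙ) of real numbers with 0 < rₙ < 1, rₙ → 1, and |f(rₙ·z₁, rₙ·z₂)| ≤ 1 for all n and all (z₁,z₂) ∈ V ∩ 𝔻², one has |f(a) − f(b)| ≤ M · |1 − conj(f(a))·f(b)|, where M = max( |a₁ − b₁|/|1 − conj(a₁)·b₁| , |a₂ − b₂|/|1 − conj(a₂)·b₂| ). -/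

import Mathlib

open Filter

/-- The open bidisk `𝔻² ⊆ ℂ²`. -/
def openBidisk : Set (ℂ × ℂ) := {z | ‖z.1‖ < 1 ∧ ‖z.2‖ < 1}

/-- The torus `𝕋²`, the distinguished boundary of the bidisk. -/
def torus : Set (ℂ × ℂ) := {z | ‖z.1‖ = 1 ∧ ‖z.2‖ = 1}

/-- The zero set in `ℂ²` of a polynomial in two variables. -/
def zeroSet (q : MvPolynomial (Fin 2) ℂ) : Set (ℂ × ℂ) :=
  {z | MvPolynomial.eval ![z.1, z.2] q = 0}

open Metric Complex ComplexConjugate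

lemma key_identity (p q : ℂ) :
    normSq (1 - conj p * q) - normSq (q - p) = (1 - normSq p) * (1 - normSq q) := by
  simp [normSq_apply, mul_re, mul_im, sub_re, sub_im, one_re, one_im, Complex.conj_re, Complex.conj_im]
  ring

lemma abs_lt_abs_of_normSq {x y : ℂ} (h : normSq x < normSq y) : ‖x‖ < ‖y‖ := by
  rw [← Complex.sq_norm, ← Complex.sq_norm] at h
  exact lt_of_pow_lt_pow_left₀ 2 (norm_nonneg y) h

lemma abs_le_abs_of_normSq {x y : ℂ} (h : normSq x ≤ normSq y) : ‖x‖ ≤ ‖y‖ := by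
  rw [← Complex.sq_norm, ← Complex.sq_norm] at h
  exact le_of_pow_le_pow_left₀ two_ne_zero (norm_nonneg y) h

lemma abs_eq_abs_of_normSq {x y : ℂ} (h : normSq x = normSq y) : ‖x‖ = ‖y‖ := by
  rw [Complex.norm_def, Complex.norm_def, h]

lemma normSq_lt_one {z : ℂ} (h : ‖z‖ < 1) : normSq z < 1 := by
  have := Complex.sq_norm z
  nlinarith [norm_nonneg z]

lemma normSq_le_one {z : ℂ} (h : ‖z‖ ≤ 1) : normSq z ≤ 1 := by
  have := Complex.sq_norm z
  nlinarith [norm_nonneg z]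

/-- Möbius strict inequality. -/
lemma mobius_lt {p q : ℂ} (hp : ‖p‖ < 1) (hq : ‖q‖ < 1) :
    ‖q - p‖ < ‖1 - conj p * q‖ := by
  apply abs_lt_abs_of_normSq
  have := key_identity p q
  nlinarith [normSq_lt_one hp, normSq_lt_one hq]

lemma mobius_le {p q : ℂ} (hp : ‖p‖ ≤ 1) (hq : ‖q‖ ≤ 1) :
    ‖q - p‖ ≤ ‖1 - conj p * q‖ := by
  apply abs_le_abs_of_normSq
  have := key_identity p q
  nlinarith [normSq_le_one hp, normSq_le_one hq]

lemma mobius_eq {p q : ℂ} (hq : ‖q‖ = 1) :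
    ‖q - p‖ = ‖1 - conj p * q‖ := by
  apply abs_eq_abs_of_normSq
  have h1 : normSq q = 1 := by rw [← Complex.sq_norm, hq]; norm_num
  have h2 := key_identity p q
  have h3 : (1 - normSq p) * (1 - normSq q) = 0 := by rw [h1]; ring
  linarith

lemma denom_ne {p q : ℂ} (hp : ‖p‖ < 1) (hq : ‖q‖ ≤ 1) :
    1 - conj p * q ≠ 0 := by
  intro h
  have h1 : conj p * q = 1 := by linear_combination -h
  have : ‖conj p * q‖ = 1 := by rw [h1, norm_one]
  rw [norm_mul, Complex.norm_conj] at this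
  nlinarith [norm_nonneg q, norm_nonneg p]

lemma denom_ne' {p q : ℂ} (hp : ‖p‖ ≤ 1) (hq : ‖q‖ < 1) :
    1 - conj p * q ≠ 0 := by
  intro h
  have h1 : conj p * q = 1 := by linear_combination -h
  have : ‖conj p * q‖ = 1 := by rw [h1, norm_one]
  rw [norm_mul, Complex.norm_conj] at this
  nlinarith [norm_nonneg q, norm_nonneg p]

lemma abs_denom_pos {p q : ℂ} (hp : ‖p‖ < 1) (hq : ‖q‖ ≤ 1) :
    0 < ‖1 - conj p * q‖ :=
  norm_pos_iff.mpr (denom_ne hp hq)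

lemma schwarzPick_strict {g : ℂ → ℂ} (hg : DifferentiableOn ℂ g (ball 0 1))
    (hb : ∀ z ∈ ball (0:ℂ) 1, ‖g z‖ < 1) {x y : ℂ}
    (hx : ‖x‖ < 1) (hy : ‖y‖ < 1) :
    ‖g x - g y‖ * ‖1 - conj x * y‖ ≤
      ‖x - y‖ * ‖1 - conj (g x) * g y‖ := by
  -- inverse Möbius map
  set minv : ℂ → ℂ := fun ζ => (ζ + x) / (1 + conj x * ζ) with hminv
  have hden : ∀ ζ : ℂ, ‖ζ‖ < 1 → (1 + conj x * ζ) ≠ 0 := by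
    intro ζ hζ
    have := denom_ne (p := -x) (q := ζ) (by simpa using hx) hζ.le
    simpa [sub_eq_add_neg] using this
  have hmaps : ∀ ζ : ℂ, ‖ζ‖ < 1 → ‖minv ζ‖ < 1 := by
    intro ζ hζ
    have h1 : ‖ζ + x‖ < ‖1 + conj x * ζ‖ := by
      have := mobius_lt (p := -x) (q := ζ) (by simpa using hx) hζ
      simpa [sub_eq_add_neg] using this
    have hpos : 0 < ‖1 + conj x * ζ‖ := by
      have := abs_denom_pos (p := -x) (q := ζ) (by simpa using hx) hζ.le
      simpa [sub_eq_add_neg] using this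
    rw [hminv]
    simp only [norm_div]
    rw [div_lt_one hpos]
    exact h1
  have hballmem : ∀ ζ : ℂ, ζ ∈ ball (0:ℂ) 1 ↔ ‖ζ‖ < 1 := by
    intro ζ; rw [mem_ball_zero_iff]
  have hminv_diff : DifferentiableOn ℂ minv (ball 0 1) := by
    apply DifferentiableOn.div
    · exact (differentiable_id.add_const x).differentiableOn
    · exact ((differentiable_const (conj x)).mul differentiable_id).const_add 1 |>.differentiableOn
    · intro ζ hζ; exact hden ζ ((hballmem ζ).1 hζ)
  have hx0 : minv 0 = x := by rw [hminv]; simp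
  have hgx : ‖g x‖ < 1 := hb x ((hballmem x).2 hx)
  set h : ℂ → ℂ := fun ζ => (g (minv ζ) - g x) / (1 - conj (g x) * g (minv ζ)) with hh
  have hminv_mapsto : Set.MapsTo minv (ball 0 1) (ball 0 1) := by
    intro ζ hζ; rw [hballmem] at *; exact hmaps ζ hζ
  have hgm : ∀ ζ ∈ ball (0:ℂ) 1, ‖g (minv ζ)‖ < 1 := fun ζ hζ =>
    hb _ (hminv_mapsto hζ)
  have hgcomp : DifferentiableOn ℂ (fun ζ => g (minv ζ)) (ball 0 1) :=
    hg.comp hminv_diff hminv_mapsto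
  have hh_diff : DifferentiableOn ℂ h (ball 0 1) := by
    apply DifferentiableOn.div
    · exact hgcomp.sub_const (g x)
    · exact (DifferentiableOn.const_mul hgcomp (conj (g x))).const_sub 1
    · intro ζ hζ; exact denom_ne hgx (hgm ζ hζ).le
  have hh0 : h 0 = 0 := by rw [hh]; simp [hx0]
  have hhlt : ∀ ζ ∈ ball (0:ℂ) 1, ‖h ζ‖ < 1 := by
    intro ζ hζ
    rw [hh]
    simp only [norm_div]
    rw [div_lt_one (abs_denom_pos hgx (hgm ζ hζ).le)]
    exact mobius_lt hgx (hgm ζ hζ)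
  have hh_mapsto : Set.MapsTo h (ball 0 1) (ball 0 1) := by
    intro ζ hζ; rw [hballmem]; exact hhlt ζ hζ
  -- Schwarz lemma
  set ζ₀ : ℂ := (y - x) / (1 - conj x * y) with hζ₀
  have hζ₀lt : ‖ζ₀‖ < 1 := by
    rw [hζ₀]
    simp only [norm_div]
    rw [div_lt_one (abs_denom_pos hx hy.le)]
    exact mobius_lt hx hy
  have hschwarz : ‖h ζ₀‖ ≤ ‖ζ₀‖ :=
    Complex.norm_le_norm_of_mapsTo_ball_self hh_diff (hh_mapsto.mono_right ball_subset_closedBall) hh0 hζ₀lt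
  -- minv ζ₀ = y
  have hxy : (1 - conj x * y) ≠ 0 := denom_ne hx hy.le
  have hd2 : 1 + conj x * ζ₀ ≠ 0 := hden ζ₀ hζ₀lt
  have hkey : ζ₀ + x = y * (1 + conj x * ζ₀) := by
    rw [hζ₀]; linear_combination div_mul_cancel₀ (y - x) hxy
  have hminvζ₀ : minv ζ₀ = y := by
    show (ζ₀ + x) / (1 + conj x * ζ₀) = y
    rw [hkey, mul_div_cancel_right₀ y hd2]
  have hfinal : ‖g y - g x‖ / ‖1 - conj (g x) * g y‖ ≤
      ‖y - x‖ / ‖1 - conj x * y‖ := by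
    have h1 : h ζ₀ = (g y - g x) / (1 - conj (g x) * g y) := by
      rw [hh]; simp only [hminvζ₀]
    rw [h1, hζ₀] at hschwarz
    simpa only [norm_div] using hschwarz
  have hgy : ‖g y‖ < 1 := hb y ((hballmem y).2 hy)
  rw [div_le_div_iff₀ (abs_denom_pos hgx hgy.le) (abs_denom_pos hx hy.le)] at hfinal
  calc ‖g x - g y‖ * ‖1 - conj x * y‖
      = ‖g y - g x‖ * ‖1 - conj x * y‖ := by
        rw [norm_sub_rev]
    _ ≤ ‖y - x‖ * ‖1 - conj (g x) * g y‖ := hfinal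
    _ = ‖x - y‖ * ‖1 - conj (g x) * g y‖ := by
        rw [norm_sub_rev]

lemma schwarzPick {g : ℂ → ℂ} (hg : DifferentiableOn ℂ g (ball 0 1))
    (hb : ∀ z ∈ ball (0:ℂ) 1, ‖g z‖ ≤ 1) {x y : ℂ}
    (hx : ‖x‖ < 1) (hy : ‖y‖ < 1) :
    ‖g x - g y‖ * ‖1 - conj x * y‖ ≤
      ‖x - y‖ * ‖1 - conj (g x) * g y‖ := by
  set t : ℕ → ℝ := fun n => (n : ℝ) / (n + 1) with ht
  have ht01 : ∀ n, 0 ≤ t n ∧ t n < 1 := by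
    intro n
    constructor
    · positivity
    · rw [div_lt_one (by positivity)]; linarith
  have htends : Tendsto t atTop (nhds 1) := by
    have := tendsto_natCast_div_add_atTop (1 : ℝ)
    simpa using this
  -- per-n inequality
  have hineq : ∀ n, t n * (‖g x - g y‖ * ‖1 - conj x * y‖) ≤
      ‖x - y‖ * ‖1 - ((t n : ℂ))^2 * (conj (g x) * g y)‖ := by
    intro n
    obtain ⟨h0, h1⟩ := ht01 n
    have hgt : ∀ z ∈ ball (0:ℂ) 1, ‖(t n : ℂ) * g z‖ < 1 := by
      intro z hz
      rw [norm_mul, Complex.norm_real, Real.norm_of_nonneg h0]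
      calc t n * ‖g z‖ ≤ t n * 1 := by
            apply mul_le_mul_of_nonneg_left (hb z hz) h0
        _ < 1 := by linarith
    have := schwarzPick_strict (g := fun z => (t n : ℂ) * g z)
      ((differentiable_const _).differentiableOn.mul hg) hgt hx hy
    calc t n * (‖g x - g y‖ * ‖1 - conj x * y‖)
        = ‖(t n : ℂ) * g x - (t n : ℂ) * g y‖ * ‖1 - conj x * y‖ := by
          rw [← mul_sub, norm_mul, Complex.norm_real, Real.norm_of_nonneg h0]; ring
      _ ≤ ‖x - y‖ * ‖1 - conj ((t n : ℂ) * g x) * ((t n : ℂ) * g y)‖ := this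
      _ = ‖x - y‖ * ‖1 - ((t n : ℂ))^2 * (conj (g x) * g y)‖ := by
          rw [map_mul, Complex.conj_ofReal]; ring_nf
  -- limits
  have hcast : Tendsto (fun n => ((t n : ℝ) : ℂ)) atTop (nhds 1) := by
    have := Complex.continuous_ofReal.continuousAt (x := (1:ℝ)) |>.tendsto.comp htends
    simpa [Function.comp_def] using this
  have hL : Tendsto (fun n => t n * (‖g x - g y‖ * ‖1 - conj x * y‖))
      atTop (nhds (‖g x - g y‖ * ‖1 - conj x * y‖)) := by
    have := htends.mul_const (‖g x - g y‖ * ‖1 - conj x * y‖)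
    simpa using this
  have hR : Tendsto (fun n => ‖x - y‖ *
      ‖1 - ((t n : ℂ))^2 * (conj (g x) * g y)‖) atTop
      (nhds (‖x - y‖ * ‖1 - conj (g x) * g y‖)) := by
    have h2 : Tendsto (fun n => (1 : ℂ) - ((t n : ℂ))^2 * (conj (g x) * g y)) atTop
        (nhds (1 - conj (g x) * g y)) := by
      have := ((hcast.pow 2).mul_const (conj (g x) * g y)).const_sub (1 : ℂ)
      simpa using this
    have := (continuous_norm.continuousAt.tendsto.comp h2).const_mul (‖x - y‖)
    simpa using this
  exact le_of_tendsto_of_tendsto' hL hR hineq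

set_option linter.unusedSectionVars false
noncomputable section
namespace SPV

variable (a₁ a₂ α γ : ℂ)

def Pf (z : ℂ) : ℂ := z - a₁
def Qf (z : ℂ) : ℂ := 1 - conj a₁ * z
def P1f (z : ℂ) : ℂ := Pf a₁ z - α * Qf a₁ z
def Q1f (z : ℂ) : ℂ := Qf a₁ z - conj α * Pf a₁ z
def P2f (z : ℂ) : ℂ := P1f a₁ α z + γ * Q1f a₁ α z
def Q2f (z : ℂ) : ℂ := Q1f a₁ α z + conj γ * P1f a₁ α z
def Nf (z : ℂ) : ℂ := Pf a₁ z * P2f a₁ α γ z + a₂ * (Qf a₁ z * Q2f a₁ α γ z)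
def Df (z : ℂ) : ℂ := Qf a₁ z * Q2f a₁ α γ z + conj a₂ * (Pf a₁ z * P2f a₁ α γ z)
def Bf (z : ℂ) : ℂ := Nf a₁ a₂ α γ z / Df a₁ a₂ α γ z

variable {a₁ a₂ α γ : ℂ} (ha₁ : ‖a₁‖ < 1) (ha₂ : ‖a₂‖ < 1)
  (hα : ‖α‖ < 1) (hγ : ‖γ‖ ≤ 1)

section chain
include ha₁

lemma Qf_ne {z : ℂ} (hz : ‖z‖ ≤ 1) : Qf a₁ z ≠ 0 := denom_ne ha₁ hz

lemma PQ_lt {z : ℂ} (hz : ‖z‖ < 1) : ‖Pf a₁ z‖ < ‖Qf a₁ z‖ :=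
  mobius_lt ha₁ hz

lemma PQ_le {z : ℂ} (hz : ‖z‖ ≤ 1) : ‖Pf a₁ z‖ ≤ ‖Qf a₁ z‖ :=
  mobius_le ha₁.le hz

lemma PQ_eq {z : ℂ} (hz : ‖z‖ = 1) : ‖Pf a₁ z‖ = ‖Qf a₁ z‖ :=
  mobius_eq hz

-- the quotient u = Pf/Qf
lemma abs_u_lt {z : ℂ} (hz : ‖z‖ < 1) :
    ‖Pf a₁ z / Qf a₁ z‖ < 1 := by
  rw [norm_div, div_lt_one (norm_pos_iff.mpr (Qf_ne ha₁ hz.le))]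
  exact PQ_lt ha₁ hz

lemma abs_u_le {z : ℂ} (hz : ‖z‖ ≤ 1) :
    ‖Pf a₁ z / Qf a₁ z‖ ≤ 1 := by
  rw [norm_div, div_le_one (norm_pos_iff.mpr (Qf_ne ha₁ hz))]
  exact PQ_le ha₁ hz

lemma abs_u_eq {z : ℂ} (hz : ‖z‖ = 1) :
    ‖Pf a₁ z / Qf a₁ z‖ = 1 := by
  rw [norm_div, div_eq_one_iff_eq (norm_ne_zero_iff.mpr (Qf_ne ha₁ hz.le))]
  exact PQ_eq ha₁ hz

include hα

lemma P1_decomp (z : ℂ) (hz : ‖z‖ ≤ 1) :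
    P1f a₁ α z = Qf a₁ z * (Pf a₁ z / Qf a₁ z - α) := by
  have h := Qf_ne ha₁ hz
  simp only [P1f]; field_simp

lemma Q1_decomp (z : ℂ) (hz : ‖z‖ ≤ 1) :
    Q1f a₁ α z = Qf a₁ z * (1 - conj α * (Pf a₁ z / Qf a₁ z)) := by
  have h := Qf_ne ha₁ hz
  simp only [Q1f]; field_simp

lemma Q1_ne {z : ℂ} (hz : ‖z‖ ≤ 1) : Q1f a₁ α z ≠ 0 := by
  rw [Q1_decomp ha₁ hα z hz]
  exact mul_ne_zero (Qf_ne ha₁ hz) (denom_ne hα (abs_u_le ha₁ hz))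

lemma P1Q1_lt {z : ℂ} (hz : ‖z‖ < 1) :
    ‖P1f a₁ α z‖ < ‖Q1f a₁ α z‖ := by
  rw [P1_decomp ha₁ hα z hz.le, Q1_decomp ha₁ hα z hz.le, norm_mul, norm_mul]
  exact mul_lt_mul_of_pos_left (mobius_lt hα (abs_u_lt ha₁ hz))
    (norm_pos_iff.mpr (Qf_ne ha₁ hz.le))

lemma P1Q1_eq {z : ℂ} (hz : ‖z‖ = 1) :
    ‖P1f a₁ α z‖ = ‖Q1f a₁ α z‖ := by
  rw [P1_decomp ha₁ hα z hz.le, Q1_decomp ha₁ hα z hz.le, norm_mul, norm_mul]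
  congr 1
  exact mobius_eq (abs_u_eq ha₁ hz)

lemma abs_v_lt {z : ℂ} (hz : ‖z‖ < 1) :
    ‖P1f a₁ α z / Q1f a₁ α z‖ < 1 := by
  rw [norm_div, div_lt_one (norm_pos_iff.mpr (Q1_ne ha₁ hα hz.le))]
  exact P1Q1_lt ha₁ hα hz

lemma abs_v_le {z : ℂ} (hz : ‖z‖ ≤ 1) :
    ‖P1f a₁ α z / Q1f a₁ α z‖ ≤ 1 := by
  rw [norm_div, div_le_one (norm_pos_iff.mpr (Q1_ne ha₁ hα hz))]
  rcases lt_or_eq_of_le hz with h | h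
  · exact (P1Q1_lt ha₁ hα h).le
  · exact (P1Q1_eq ha₁ hα h).le

include hγ

lemma P2_decomp (z : ℂ) (hz : ‖z‖ ≤ 1) :
    P2f a₁ α γ z = Q1f a₁ α z * (P1f a₁ α z / Q1f a₁ α z - (-γ)) := by
  have h := Q1_ne ha₁ hα hz
  simp only [P2f]; field_simp
  ring

lemma Q2_decomp (z : ℂ) (hz : ‖z‖ ≤ 1) :
    Q2f a₁ α γ z = Q1f a₁ α z * (1 - conj (-γ) * (P1f a₁ α z / Q1f a₁ α z)) := by
  have h := Q1_ne ha₁ hα hz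
  simp only [Q2f, map_neg]; field_simp
  ring

lemma Q2_ne {z : ℂ} (hz : ‖z‖ < 1) : Q2f a₁ α γ z ≠ 0 := by
  rw [Q2_decomp ha₁ hα hγ z hz.le]
  exact mul_ne_zero (Q1_ne ha₁ hα hz.le)
    (denom_ne' (by simpa using hγ) (abs_v_lt ha₁ hα hz))

lemma P2Q2_le {z : ℂ} (hz : ‖z‖ < 1) :
    ‖P2f a₁ α γ z‖ ≤ ‖Q2f a₁ α γ z‖ := by
  rw [P2_decomp ha₁ hα hγ z hz.le, Q2_decomp ha₁ hα hγ z hz.le, norm_mul, norm_mul]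
  exact mul_le_mul_of_nonneg_left
    (mobius_le (by simpa using hγ) (abs_v_le ha₁ hα hz.le)) (norm_nonneg _)

-- G = (Pf * P2f) / (Qf * Q2f)
lemma DG_ne {z : ℂ} (hz : ‖z‖ < 1) : Qf a₁ z * Q2f a₁ α γ z ≠ 0 :=
  mul_ne_zero (Qf_ne ha₁ hz.le) (Q2_ne ha₁ hα hγ hz)

lemma abs_G_lt {z : ℂ} (hz : ‖z‖ < 1) :
    ‖Pf a₁ z * P2f a₁ α γ z / (Qf a₁ z * Q2f a₁ α γ z)‖ < 1 := by
  rw [norm_div, div_lt_one (norm_pos_iff.mpr (DG_ne ha₁ hα hγ hz))]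
  rw [norm_mul, norm_mul]
  calc ‖Pf a₁ z‖ * ‖P2f a₁ α γ z‖
      ≤ ‖Pf a₁ z‖ * ‖Q2f a₁ α γ z‖ :=
        mul_le_mul_of_nonneg_left (P2Q2_le ha₁ hα hγ hz) (norm_nonneg _)
    _ < ‖Qf a₁ z‖ * ‖Q2f a₁ α γ z‖ :=
        mul_lt_mul_of_pos_right (PQ_lt ha₁ hz) (norm_pos_iff.mpr (Q2_ne ha₁ hα hγ hz))

include ha₂

lemma Nf_decomp (z : ℂ) (hz : ‖z‖ < 1) :
    Nf a₁ a₂ α γ z = (Qf a₁ z * Q2f a₁ α γ z) *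
      (Pf a₁ z * P2f a₁ α γ z / (Qf a₁ z * Q2f a₁ α γ z) - (-a₂)) := by
  have h := DG_ne ha₁ hα hγ hz
  have h1 := Qf_ne ha₁ hz.le
  have h2 := Q2_ne ha₁ hα hγ hz
  simp only [Nf]; field_simp
  ring

lemma Df_decomp (z : ℂ) (hz : ‖z‖ < 1) :
    Df a₁ a₂ α γ z = (Qf a₁ z * Q2f a₁ α γ z) *
      (1 - conj (-a₂) * (Pf a₁ z * P2f a₁ α γ z / (Qf a₁ z * Q2f a₁ α γ z))) := by
  have h := DG_ne ha₁ hα hγ hz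
  have h1 := Qf_ne ha₁ hz.le
  have h2 := Q2_ne ha₁ hα hγ hz
  simp only [Df, map_neg]; field_simp
  ring

lemma Df_ne {z : ℂ} (hz : ‖z‖ < 1) : Df a₁ a₂ α γ z ≠ 0 := by
  rw [Df_decomp ha₁ ha₂ hα hγ z hz]
  exact mul_ne_zero (DG_ne ha₁ hα hγ hz)
    (denom_ne (by simpa using ha₂) (abs_G_lt ha₁ hα hγ hz).le)

lemma abs_B_lt {z : ℂ} (hz : ‖z‖ < 1) : ‖Bf a₁ a₂ α γ z‖ < 1 := by
  rw [Bf, Nf_decomp ha₁ ha₂ hα hγ z hz, Df_decomp ha₁ ha₂ hα hγ z hz]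
  rw [mul_div_mul_left _ _ (DG_ne ha₁ hα hγ hz), norm_div,
    div_lt_one (abs_denom_pos (by simpa using ha₂) (abs_G_lt ha₁ hα hγ hz).le)]
  exact mobius_lt (by simpa using ha₂) (abs_G_lt ha₁ hα hγ hz)

lemma Bf_a₁ : Bf a₁ a₂ α γ a₁ = a₂ := by
  have hP : Pf a₁ a₁ = 0 := by simp [Pf]
  have hD : Df a₁ a₂ α γ a₁ = Qf a₁ a₁ * Q2f a₁ α γ a₁ := by
    rw [Df, hP]; ring
  have hN : Nf a₁ a₂ α γ a₁ = a₂ * (Qf a₁ a₁ * Q2f a₁ α γ a₁) := by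
    rw [Nf, hP]; ring
  rw [Bf, hN, hD, mul_div_assoc, div_self (DG_ne ha₁ hα hγ ha₁), mul_one]

lemma Bf_b₁ {b₁ b₂ : ℂ} (hb₁ : ‖b₁‖ < 1)
    (hαdef : b₁ - a₁ - α * (1 - conj a₁ * b₁) = 0)
    (hint : γ * α * (1 - conj a₂ * b₂) = b₂ - a₂) :
    Bf a₁ a₂ α γ b₁ = b₂ := by
  have hP1 : P1f a₁ α b₁ = 0 := by
    simp only [P1f, Pf, Qf]; linear_combination hαdef
  have hPf : Pf a₁ b₁ = α * Qf a₁ b₁ := by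
    simp only [P1f] at hP1; linear_combination hP1
  have hP2 : P2f a₁ α γ b₁ = γ * Q1f a₁ α b₁ := by
    simp only [P2f]; rw [hP1]; ring
  have hQ2 : Q2f a₁ α γ b₁ = Q1f a₁ α b₁ := by
    simp only [Q2f]; rw [hP1]; ring
  have hN : Nf a₁ a₂ α γ b₁ = Qf a₁ b₁ * Q1f a₁ α b₁ * (γ * α + a₂) := by
    simp only [Nf]; rw [hPf, hP2, hQ2]; ring
  have hD : Df a₁ a₂ α γ b₁ = Qf a₁ b₁ * Q1f a₁ α b₁ * (1 + conj a₂ * (γ * α)) := by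
    simp only [Df]; rw [hPf, hP2, hQ2]; ring
  have hDne := Df_ne ha₁ ha₂ hα hγ hb₁
  rw [Bf, div_eq_iff hDne, hN, hD]
  linear_combination (Qf a₁ b₁ * Q1f a₁ α b₁) * hint

omit ha₂ hγ in
/-- when `|γ| = 1`, the Blaschke factor degenerates: `P2f = γ * Q2f`. -/
lemma P2_eq_gamma_Q2 (hγ1 : ‖γ‖ = 1) (z : ℂ) :
    P2f a₁ α γ z = γ * Q2f a₁ α γ z := by
  have h : γ * conj γ = 1 := by
    rw [mul_comm, ← Complex.normSq_eq_conj_mul_self, ← Complex.sq_norm, hγ1]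
    norm_num
  simp only [P2f, Q2f]
  linear_combination (-(P1f a₁ α z)) * h

-- continuity of the building blocks
omit ha₁ ha₂ hα hγ in
lemma Nf_continuous : Continuous (Nf a₁ a₂ α γ) := by
  unfold Nf P2f Q2f P1f Q1f Pf Qf; fun_prop

omit ha₁ ha₂ hα hγ in
lemma Df_continuous : Continuous (Df a₁ a₂ α γ) := by
  unfold Df P2f Q2f P1f Q1f Pf Qf; fun_prop

/-- Boundary behaviour: along a sequence in the open disk converging to a boundary
point, `|Bf|` tends to `1`. -/
lemma abs_B_tendsto {z : ℕ → ℂ} {zL : ℂ} (hzk : ∀ k, ‖z k‖ < 1)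
    (hzlim : Tendsto z atTop (nhds zL)) (hzL : ‖zL‖ = 1) :
    Tendsto (fun k => ‖Bf a₁ a₂ α γ (z k)‖) atTop (nhds 1) := by
  have hQfne : Qf a₁ zL ≠ 0 := Qf_ne ha₁ hzL.le
  have huL : ‖Pf a₁ zL / Qf a₁ zL‖ = 1 := abs_u_eq ha₁ hzL
  have hQ1ne : Q1f a₁ α zL ≠ 0 := Q1_ne ha₁ hα hzL.le
  have hvL : ‖P1f a₁ α zL / Q1f a₁ α zL‖ = 1 := by
    rw [norm_div, div_eq_one_iff_eq (norm_ne_zero_iff.mpr hQ1ne)]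
    exact P1Q1_eq ha₁ hα hzL
  rcases lt_or_eq_of_le hγ with hγlt | hγeq
  · -- |γ| < 1 : Bf is continuous at zL with unimodular value
    have hQ2ne : Q2f a₁ α γ zL ≠ 0 := by
      rw [Q2_decomp ha₁ hα hγ zL hzL.le]
      exact mul_ne_zero hQ1ne (denom_ne (by simpa using hγlt) hvL.le)
    have hP2Q2 : ‖P2f a₁ α γ zL‖ = ‖Q2f a₁ α γ zL‖ := by
      rw [P2_decomp ha₁ hα hγ zL hzL.le, Q2_decomp ha₁ hα hγ zL hzL.le, norm_mul, norm_mul]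
      congr 1
      exact mobius_eq hvL
    have hDGne : Qf a₁ zL * Q2f a₁ α γ zL ≠ 0 := mul_ne_zero hQfne hQ2ne
    have hGL : ‖Pf a₁ zL * P2f a₁ α γ zL / (Qf a₁ zL * Q2f a₁ α γ zL)‖ = 1 := by
      rw [norm_div, div_eq_one_iff_eq (norm_ne_zero_iff.mpr hDGne), norm_mul, norm_mul,
        PQ_eq ha₁ hzL, hP2Q2]
    have hDfne : Df a₁ a₂ α γ zL ≠ 0 := by
      have : Df a₁ a₂ α γ zL = (Qf a₁ zL * Q2f a₁ α γ zL) *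
          (1 - conj (-a₂) * (Pf a₁ zL * P2f a₁ α γ zL / (Qf a₁ zL * Q2f a₁ α γ zL))) := by
        simp only [Df, map_neg]; field_simp
        try ring
      rw [this]
      exact mul_ne_zero hDGne (denom_ne (by simpa using ha₂) hGL.le)
    have habsBL : ‖Bf a₁ a₂ α γ zL‖ = 1 := by
      have hNd : Nf a₁ a₂ α γ zL = (Qf a₁ zL * Q2f a₁ α γ zL) *
          (Pf a₁ zL * P2f a₁ α γ zL / (Qf a₁ zL * Q2f a₁ α γ zL) - (-a₂)) := by
        simp only [Nf]; field_simp
        try ring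
      have hDd : Df a₁ a₂ α γ zL = (Qf a₁ zL * Q2f a₁ α γ zL) *
          (1 - conj (-a₂) * (Pf a₁ zL * P2f a₁ α γ zL / (Qf a₁ zL * Q2f a₁ α γ zL))) := by
        simp only [Df, map_neg]; field_simp
        try ring
      rw [Bf, hNd, hDd, mul_div_mul_left _ _ hDGne, norm_div,
        div_eq_one_iff_eq]
      · exact mobius_eq hGL
      · exact norm_ne_zero_iff.mpr (denom_ne (by simpa using ha₂) hGL.le)
    have hBcont : ContinuousAt (Bf a₁ a₂ α γ) zL :=
      ContinuousAt.div (Nf_continuous.continuousAt) (Df_continuous.continuousAt) hDfne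
    have h2 : Tendsto (fun k => ‖Bf a₁ a₂ α γ (z k)‖) atTop
        (nhds (‖Bf a₁ a₂ α γ zL‖)) :=
      (continuous_norm.continuousAt.comp hBcont).tendsto.comp hzlim
    rwa [habsBL] at h2
  · -- |γ| = 1 : Bf coincides on the disk with a simpler Möbius transform
    set B' : ℂ → ℂ := fun w => (γ * Pf a₁ w + a₂ * Qf a₁ w) / (Qf a₁ w + conj a₂ * (γ * Pf a₁ w))
      with hB'
    have hagree : ∀ k, Bf a₁ a₂ α γ (z k) = B' (z k) := by
      intro k
      have hQ2ne : Q2f a₁ α γ (z k) ≠ 0 := Q2_ne ha₁ hα hγ (hzk k)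
      rw [Bf, hB']
      simp only [Nf, Df, P2_eq_gamma_Q2 ha₁ hα hγeq]
      rw [div_eq_div_iff]
      · ring
      · have := Df_ne ha₁ ha₂ hα hγ (hzk k)
        rw [Df] at this
        rw [P2_eq_gamma_Q2 ha₁ hα hγeq] at this
        intro hc; apply this; rw [← hc]; try ring
      · have hQfk : Qf a₁ (z k) ≠ 0 := Qf_ne ha₁ (hzk k).le
        have hden : Qf a₁ (z k) + conj a₂ * (γ * Pf a₁ (z k)) =
            Qf a₁ (z k) * (1 - conj (-a₂) * (γ * (Pf a₁ (z k) / Qf a₁ (z k)))) := by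
          simp only [map_neg]; field_simp
          try ring
        rw [hden]
        apply mul_ne_zero (Qf_ne ha₁ (hzk k).le)
        apply denom_ne (by simpa using ha₂)
        rw [norm_mul, hγeq, one_mul]
        exact (abs_u_lt ha₁ (hzk k)).le
    have hγu : ‖γ * (Pf a₁ zL / Qf a₁ zL)‖ = 1 := by
      rw [norm_mul, hγeq, huL, one_mul]
    have hdenne : Qf a₁ zL + conj a₂ * (γ * Pf a₁ zL) ≠ 0 := by
      have hden : Qf a₁ zL + conj a₂ * (γ * Pf a₁ zL) =
          Qf a₁ zL * (1 - conj (-a₂) * (γ * (Pf a₁ zL / Qf a₁ zL))) := by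
        simp only [map_neg]; field_simp
        try ring
      rw [hden]
      exact mul_ne_zero hQfne (denom_ne (by simpa using ha₂) hγu.le)
    have habsB'L : ‖B' zL‖ = 1 := by
      have hnum : γ * Pf a₁ zL + a₂ * Qf a₁ zL =
          Qf a₁ zL * (γ * (Pf a₁ zL / Qf a₁ zL) - (-a₂)) := by
        field_simp
        try ring
      have hden : Qf a₁ zL + conj a₂ * (γ * Pf a₁ zL) =
          Qf a₁ zL * (1 - conj (-a₂) * (γ * (Pf a₁ zL / Qf a₁ zL))) := by
        simp only [map_neg]; field_simp
        try ring
      rw [hB']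
      simp only
      rw [hnum, hden, mul_div_mul_left _ _ hQfne, norm_div, div_eq_one_iff_eq]
      · exact mobius_eq hγu
      · exact norm_ne_zero_iff.mpr (denom_ne (by simpa using ha₂) hγu.le)
    have hB'cont : ContinuousAt B' zL := by
      apply ContinuousAt.div
      · simp only [Pf, Qf]; fun_prop
      · simp only [Pf, Qf]; fun_prop
      · exact hdenne
    have h1 : Tendsto (fun k => ‖B' (z k)‖) atTop
        (nhds (‖B' zL‖)) :=
      (continuous_norm.continuousAt.comp hB'cont).tendsto.comp hzlim
    rw [habsB'L] at h1
    apply h1.congr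
    intro k
    rw [hagree k]

end chain

end SPV
namespace SPV

def qpoly (a₁ a₂ α γ : ℂ) : MvPolynomial (Fin 2) ℂ :=
  MvPolynomial.X 1 *
      ((1 - MvPolynomial.C (conj a₁) * MvPolynomial.X 0) *
          ((1 - MvPolynomial.C (conj a₁) * MvPolynomial.X 0 -
              MvPolynomial.C (conj α) * (MvPolynomial.X 0 - MvPolynomial.C a₁)) +
            MvPolynomial.C (conj γ) *
              (MvPolynomial.X 0 - MvPolynomial.C a₁ -
                MvPolynomial.C α * (1 - MvPolynomial.C (conj a₁) * MvPolynomial.X 0))) +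
        MvPolynomial.C (conj a₂) *
          ((MvPolynomial.X 0 - MvPolynomial.C a₁) *
            ((MvPolynomial.X 0 - MvPolynomial.C a₁ -
                MvPolynomial.C α * (1 - MvPolynomial.C (conj a₁) * MvPolynomial.X 0)) +
              MvPolynomial.C γ *
                (1 - MvPolynomial.C (conj a₁) * MvPolynomial.X 0 -
                  MvPolynomial.C (conj α) * (MvPolynomial.X 0 - MvPolynomial.C a₁))))) -
    ((MvPolynomial.X 0 - MvPolynomial.C a₁) *
        ((MvPolynomial.X 0 - MvPolynomial.C a₁ -
            MvPolynomial.C α * (1 - MvPolynomial.C (conj a₁) * MvPolynomial.X 0)) +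
          MvPolynomial.C γ *
            (1 - MvPolynomial.C (conj a₁) * MvPolynomial.X 0 -
              MvPolynomial.C (conj α) * (MvPolynomial.X 0 - MvPolynomial.C a₁))) +
      MvPolynomial.C a₂ *
        ((1 - MvPolynomial.C (conj a₁) * MvPolynomial.X 0) *
          ((1 - MvPolynomial.C (conj a₁) * MvPolynomial.X 0 -
              MvPolynomial.C (conj α) * (MvPolynomial.X 0 - MvPolynomial.C a₁)) +
            MvPolynomial.C (conj γ) *
              (MvPolynomial.X 0 - MvPolynomial.C a₁ -
                MvPolynomial.C α * (1 - MvPolynomial.C (conj a₁) * MvPolynomial.X 0)))))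

lemma eval_qpoly (a₁ a₂ α γ z w : ℂ) :
    MvPolynomial.eval ![z, w] (qpoly a₁ a₂ α γ) =
      w * Df a₁ a₂ α γ z - Nf a₁ a₂ α γ z := by
  simp only [qpoly, Nf, Df, P2f, Q2f, P1f, Q1f, Pf, Qf, map_sub, map_add, map_mul, map_one,
    MvPolynomial.eval_X, MvPolynomial.eval_C, Matrix.cons_val_zero, Matrix.cons_val_one,
    Matrix.head_cons]
  try ring

lemma Nf_differentiable (a₁ a₂ α γ : ℂ) : Differentiable ℂ (Nf a₁ a₂ α γ) := by
  unfold Nf P2f Q2f P1f Q1f Pf Qf; fun_prop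

lemma Df_differentiable (a₁ a₂ α γ : ℂ) : Differentiable ℂ (Df a₁ a₂ α γ) := by
  unfold Df P2f Q2f P1f Q1f Pf Qf; fun_prop

lemma mem_zeroSet_iff {a₁ a₂ α γ : ℂ} (ha₁ : ‖a₁‖ < 1) (ha₂ : ‖a₂‖ < 1)
    (hα : ‖α‖ < 1) (hγ : ‖γ‖ ≤ 1) {z w : ℂ} (hz : ‖z‖ < 1) :
    ((z, w) ∈ zeroSet (qpoly a₁ a₂ α γ)) ↔ w = Bf a₁ a₂ α γ z := by
  have hD := Df_ne ha₁ ha₂ hα hγ hz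
  show MvPolynomial.eval ![z, w] (qpoly a₁ a₂ α γ) = 0 ↔ _
  rw [eval_qpoly, sub_eq_zero, Bf, eq_div_iff hD]

end SPV

lemma isOpen_openBidisk : IsOpen openBidisk := by
  have h1 : IsOpen {p : ℂ × ℂ | ‖p.1‖ < 1} :=
    isOpen_lt (continuous_norm.comp continuous_fst) continuous_const
  have h2 : IsOpen {p : ℂ × ℂ | ‖p.2‖ < 1} :=
    isOpen_lt (continuous_norm.comp continuous_snd) continuous_const
  exact (h1.inter h2 : _)

lemma core {a₁ a₂ b₁ b₂ : ℂ} (ha₁ : ‖a₁‖ < 1) (ha₂ : ‖a₂‖ < 1)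
    (hb₁ : ‖b₁‖ < 1) (hb₂ : ‖b₂‖ < 1)
    (hρ : ‖a₂ - b₂‖ / ‖1 - conj a₂ * b₂‖ ≤
          ‖a₁ - b₁‖ / ‖1 - conj a₁ * b₁‖) :
    ∃ q : MvPolynomial (Fin 2) ℂ,
      (zeroSet q ∩ openBidisk).Nonempty ∧
      closure (zeroSet q ∩ openBidisk) ∩ frontier openBidisk ⊆ torus ∧
      ∀ f : ℂ × ℂ → ℂ, DifferentiableOn ℂ f openBidisk →
        (∃ r : ℕ → ℝ, (∀ n, 0 < r n ∧ r n < 1) ∧ Tendsto r atTop (nhds 1) ∧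
          ∀ n, ∀ z ∈ zeroSet q ∩ openBidisk,
            ‖f ((r n : ℝ) * z.1, (r n : ℝ) * z.2)‖ ≤ 1) →
        ‖f (a₁, a₂) - f (b₁, b₂)‖ ≤
          ‖a₁ - b₁‖ / ‖1 - conj a₁ * b₁‖ *
            ‖1 - conj (f (a₁, a₂)) * f (b₁, b₂)‖ := by
  classical
  have hd₁ : (1 : ℂ) - conj a₁ * b₁ ≠ 0 := denom_ne ha₁ hb₁.le
  have hd₂ : (1 : ℂ) - conj a₂ * b₂ ≠ 0 := denom_ne ha₂ hb₂.le
  set α : ℂ := (b₁ - a₁) / (1 - conj a₁ * b₁) with hαdef0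
  have hα : ‖α‖ < 1 := by
    rw [hαdef0, norm_div, div_lt_one (abs_denom_pos ha₁ hb₁.le)]
    exact mobius_lt ha₁ hb₁
  set γ : ℂ := if b₁ = a₁ then 0 else ((b₂ - a₂) / (1 - conj a₂ * b₂)) / α with hγdef0
  have hγ : ‖γ‖ ≤ 1 := by
    rw [hγdef0]
    by_cases hba : b₁ = a₁
    · simp [hba]
    · rw [if_neg hba]
      have hαne : ‖α‖ ≠ 0 := by
        rw [hαdef0, norm_div]
        apply div_ne_zero _ (abs_denom_pos ha₁ hb₁.le).ne'
        simpa [sub_eq_zero] using hba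
      have hαpos : 0 < ‖α‖ := lt_of_le_of_ne (norm_nonneg α) (Ne.symm hαne)
      rw [norm_div, div_le_one hαpos, hαdef0, norm_div, norm_div]
      calc ‖b₂ - a₂‖ / ‖1 - conj a₂ * b₂‖
          = ‖a₂ - b₂‖ / ‖1 - conj a₂ * b₂‖ := by
            rw [norm_sub_rev]
        _ ≤ ‖a₁ - b₁‖ / ‖1 - conj a₁ * b₁‖ := hρ
        _ = ‖b₁ - a₁‖ / ‖1 - conj a₁ * b₁‖ := by
            rw [norm_sub_rev]
  refine ⟨SPV.qpoly a₁ a₂ α γ, ?_, ?_, ?_⟩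
  · -- nonempty
    refine ⟨(a₁, a₂), ?_, ha₁, ha₂⟩
    rw [SPV.mem_zeroSet_iff ha₁ ha₂ hα hγ ha₁]
    exact (SPV.Bf_a₁ ha₁ ha₂ hα hγ).symm
  · -- distinguished
    intro x hx
    obtain ⟨hxc, hxf⟩ := hx
    obtain ⟨s, hsmem, hslim⟩ := mem_closure_iff_seq_limit.1 hxc
    have hs1 : ∀ n, ‖(s n).1‖ < 1 := fun n => (hsmem n).2.1
    have hs2 : ∀ n, ‖(s n).2‖ < 1 := fun n => (hsmem n).2.2
    have hsB : ∀ n, (s n).2 = SPV.Bf a₁ a₂ α γ (s n).1 := by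
      intro n
      have := (hsmem n).1
      rw [show s n = ((s n).1, (s n).2) from rfl] at this
      exact (SPV.mem_zeroSet_iff ha₁ ha₂ hα hγ (hs1 n)).1 this
    have h1lim : Tendsto (fun n => (s n).1) atTop (nhds x.1) :=
      (continuous_fst.tendsto x).comp hslim
    have h2lim : Tendsto (fun n => (s n).2) atTop (nhds x.2) :=
      (continuous_snd.tendsto x).comp hslim
    have hle : ‖x.1‖ ≤ 1 :=
      le_of_tendsto ((continuous_norm.tendsto x.1).comp h1lim)
        (Eventually.of_forall fun n => (hs1 n).le)
    rcases lt_or_eq_of_le hle with hlt | heq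
    · exfalso
      have hBcont : ContinuousAt (SPV.Bf a₁ a₂ α γ) x.1 := by
        apply ContinuousAt.div (SPV.Nf_continuous.continuousAt) (SPV.Df_continuous.continuousAt)
        exact SPV.Df_ne ha₁ ha₂ hα hγ hlt
      have hBlim : Tendsto (fun n => SPV.Bf a₁ a₂ α γ (s n).1) atTop
          (nhds (SPV.Bf a₁ a₂ α γ x.1)) := hBcont.tendsto.comp h1lim
      have hx2 : x.2 = SPV.Bf a₁ a₂ α γ x.1 :=
        tendsto_nhds_unique (h2lim.congr fun n => hsB n) hBlim
      have hxin : x ∈ openBidisk := ⟨hlt, hx2 ▸ SPV.abs_B_lt ha₁ ha₂ hα hγ hlt⟩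
      rw [isOpen_openBidisk.frontier_eq] at hxf
      exact hxf.2 hxin
    · have hBtends := SPV.abs_B_tendsto ha₁ ha₂ hα hγ hs1 h1lim heq
      have habs2 : Tendsto (fun n => ‖(s n).2‖) atTop (nhds (‖x.2‖)) :=
        (continuous_norm.tendsto x.2).comp h2lim
      have : ‖x.2‖ = 1 :=
        tendsto_nhds_unique (habs2.congr fun n => by rw [hsB n]) hBtends
      exact ⟨heq, this⟩
  · -- Schwarz-Pick clause
    intro f hf hyp
    obtain ⟨r, hr01, hrlim, hrbd⟩ := hyp
    by_cases hba : b₁ = a₁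
    · have hb2a2 : b₂ = a₂ := by
        have hρ1 : ‖a₁ - b₁‖ / ‖1 - conj a₁ * b₁‖ = 0 := by
          rw [hba]; simp
        have h0 : ‖a₂ - b₂‖ / ‖1 - conj a₂ * b₂‖ = 0 :=
          le_antisymm (hρ1 ▸ hρ) (by positivity)
        have := (div_eq_zero_iff.1 h0).resolve_right (abs_denom_pos ha₂ hb₂.le).ne'
        rw [norm_eq_zero, sub_eq_zero] at this
        exact this.symm
      rw [hba, hb2a2]
      simp only [sub_self, norm_zero]
      positivity
    · -- main case
      set B := SPV.Bf a₁ a₂ α γ with hB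
      have hBdiff : DifferentiableOn ℂ B (ball 0 1) := by
        apply DifferentiableOn.div (SPV.Nf_differentiable a₁ a₂ α γ).differentiableOn
          (SPV.Df_differentiable a₁ a₂ α γ).differentiableOn
        intro z hz
        rw [mem_ball_zero_iff] at hz
        exact SPV.Df_ne ha₁ ha₂ hα hγ hz
      have hmaps : ∀ ζ ∈ ball (0:ℂ) 1, (ζ, B ζ) ∈ openBidisk := by
        intro ζ hζ
        rw [mem_ball_zero_iff] at hζ
        exact ⟨hζ, SPV.abs_B_lt ha₁ ha₂ hα hγ hζ⟩
      set g : ℂ → ℂ := fun ζ => f (ζ, B ζ) with hg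
      have hgdiff : DifferentiableOn ℂ g (ball 0 1) := by
        apply hf.comp (DifferentiableOn.prodMk differentiableOn_id hBdiff)
        intro ζ hζ
        exact hmaps ζ hζ
      have hgbd : ∀ ζ ∈ ball (0:ℂ) 1, ‖g ζ‖ ≤ 1 := by
        intro ζ hζ
        have hζ' := mem_ball_zero_iff.1 hζ
        have hpmem : (ζ, B ζ) ∈ zeroSet (SPV.qpoly a₁ a₂ α γ) ∩ openBidisk := by
          refine ⟨?_, hmaps ζ hζ⟩
          rw [SPV.mem_zeroSet_iff ha₁ ha₂ hα hγ hζ']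
        have hfc : ContinuousAt f (ζ, B ζ) :=
          hf.continuousOn.continuousAt (isOpen_openBidisk.mem_nhds (hmaps ζ hζ))
        have hcast : Tendsto (fun n => ((r n : ℝ) : ℂ)) atTop (nhds 1) := by
          have := Complex.continuous_ofReal.continuousAt (x := (1:ℝ)) |>.tendsto.comp hrlim
          simpa [Function.comp_def] using this
        have hseq : Tendsto (fun n => (((r n : ℝ) : ℂ) * ζ, ((r n : ℝ) : ℂ) * B ζ)) atTop
            (nhds (ζ, B ζ)) := by
          have := (hcast.mul_const ζ).prodMk_nhds (hcast.mul_const (B ζ))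
          simpa using this
        have hflim : Tendsto (fun n => f (((r n : ℝ) : ℂ) * ζ, ((r n : ℝ) : ℂ) * B ζ)) atTop
            (nhds (f (ζ, B ζ))) := hfc.tendsto.comp hseq
        exact le_of_tendsto ((continuous_norm.tendsto _).comp hflim)
          (Eventually.of_forall fun n => hrbd n (ζ, B ζ) hpmem)
      have hSP := schwarzPick hgdiff hgbd ha₁ hb₁
      have hga : g a₁ = f (a₁, a₂) := by
        rw [hg]; simp only; rw [hB, SPV.Bf_a₁ ha₁ ha₂ hα hγ]
      have hαne : α ≠ 0 := by
        rw [hαdef0]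
        apply div_ne_zero _ hd₁
        simpa [sub_eq_zero] using hba
      have hint : γ * α * (1 - conj a₂ * b₂) = b₂ - a₂ := by
        rw [hγdef0, if_neg hba, div_mul_cancel₀ _ hαne, div_mul_cancel₀ _ hd₂]
      have hαdef : b₁ - a₁ - α * (1 - conj a₁ * b₁) = 0 := by
        rw [hαdef0, div_mul_cancel₀ _ hd₁]; ring
      have hgb : g b₁ = f (b₁, b₂) := by
        rw [hg]; simp only; rw [hB, SPV.Bf_b₁ ha₁ ha₂ hα hγ hb₁ hαdef hint]
      rw [div_mul_eq_mul_div, le_div_iff₀ (abs_denom_pos ha₁ hb₁.le)]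
      calc ‖f (a₁, a₂) - f (b₁, b₂)‖ * ‖1 - conj a₁ * b₁‖
          = ‖g a₁ - g b₁‖ * ‖1 - conj a₁ * b₁‖ := by
            rw [hga, hgb]
        _ ≤ ‖a₁ - b₁‖ * ‖1 - conj (g a₁) * g b₁‖ := hSP
        _ = ‖a₁ - b₁‖ * ‖1 - conj (f (a₁, a₂)) * f (b₁, b₂)‖ := by
            rw [hga, hgb]

lemma swap_mem_openBidisk {p : ℂ × ℂ} : (p.2, p.1) ∈ openBidisk ↔ p ∈ openBidisk := by
  constructor <;> exact fun h => ⟨h.2, h.1⟩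

lemma openBidisk_swap : Prod.swap ⁻¹' openBidisk = openBidisk := by
  ext p
  exact swap_mem_openBidisk

lemma zeroSet_rename_swap (q : MvPolynomial (Fin 2) ℂ) :
    zeroSet (MvPolynomial.rename (Equiv.swap (0 : Fin 2) 1) q) = Prod.swap ⁻¹' zeroSet q := by
  ext p
  show MvPolynomial.eval ![p.1, p.2] (MvPolynomial.rename (Equiv.swap (0 : Fin 2) 1) q) = 0 ↔
    MvPolynomial.eval ![p.2, p.1] q = 0
  rw [MvPolynomial.eval_rename]
  have hc : (![p.1, p.2] ∘ (Equiv.swap (0 : Fin 2) 1)) = ![p.2, p.1] := by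
    funext i
    fin_cases i <;> simp [Equiv.swap_apply_left, Equiv.swap_apply_right]
  rw [hc]

/-- **A Schwarz–Pick inequality on a distinguished variety of the bidisk (radial-limit
case).** -/
theorem schwarz_pick_distinguished_variety_radial (a b : ℂ × ℂ)
    (ha : a ∈ openBidisk) (hb : b ∈ openBidisk) :
    ∃ q : MvPolynomial (Fin 2) ℂ,
      (zeroSet q ∩ openBidisk).Nonempty ∧
      closure (zeroSet q ∩ openBidisk) ∩ frontier openBidisk ⊆ torus ∧
      ∀ f : ℂ × ℂ → ℂ, DifferentiableOn ℂ f openBidisk →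
        (∃ r : ℕ → ℝ, (∀ n, 0 < r n ∧ r n < 1) ∧ Tendsto r atTop (nhds 1) ∧
          ∀ n, ∀ z ∈ zeroSet q ∩ openBidisk,
            ‖f ((r n : ℂ) * z.1, (r n : ℂ) * z.2)‖ ≤ 1) →
        ‖f a - f b‖ ≤
          max (‖a.1 - b.1‖ / ‖1 - (starRingEnd ℂ) a.1 * b.1‖)
              (‖a.2 - b.2‖ / ‖1 - (starRingEnd ℂ) a.2 * b.2‖) *
            ‖1 - (starRingEnd ℂ) (f a) * f b‖ := by
  obtain ⟨ha1, ha2⟩ := ha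
  obtain ⟨hb1, hb2⟩ := hb
  rcases le_total (‖a.2 - b.2‖ / ‖1 - conj a.2 * b.2‖)
      (‖a.1 - b.1‖ / ‖1 - conj a.1 * b.1‖) with h | h
  · obtain ⟨q, h1, h2, h3⟩ := core ha1 ha2 hb1 hb2 h
    refine ⟨q, h1, h2, fun f hf hyp => ?_⟩
    have := h3 f hf hyp
    rw [Prod.mk.eta, Prod.mk.eta] at this
    refine this.trans (mul_le_mul_of_nonneg_right (le_max_left _ _) (norm_nonneg _))
  · obtain ⟨q, h1, h2, h3⟩ := core ha2 ha1 hb2 hb1 h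
    refine ⟨MvPolynomial.rename (Equiv.swap (0 : Fin 2) 1) q, ?_, ?_, ?_⟩
    · obtain ⟨p, hp1, hp2⟩ := h1
      refine ⟨(p.2, p.1), ?_, swap_mem_openBidisk.2 hp2⟩
      rw [zeroSet_rename_swap]
      simpa using hp1
    · -- distinguished
      have hkey : zeroSet (MvPolynomial.rename (Equiv.swap (0 : Fin 2) 1) q) ∩ openBidisk =
          Prod.swap ⁻¹' (zeroSet q ∩ openBidisk) := by
        rw [zeroSet_rename_swap, Set.preimage_inter, openBidisk_swap]
      intro x hx
      obtain ⟨hxc, hxf⟩ := hx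
      rw [hkey] at hxc
      have hhom : (Homeomorph.prodComm ℂ ℂ : ℂ × ℂ → ℂ × ℂ) = Prod.swap := rfl
      have hclos : Prod.swap ⁻¹' closure (zeroSet q ∩ openBidisk) =
          closure (Prod.swap ⁻¹' (zeroSet q ∩ openBidisk)) := by
        rw [← hhom, Homeomorph.preimage_closure]
      have hxc' : Prod.swap x ∈ closure (zeroSet q ∩ openBidisk) := by
        rw [← Set.mem_preimage, hclos]
        exact hxc
      have hfr : Prod.swap ⁻¹' frontier openBidisk = frontier openBidisk := by
        rw [← hhom, Homeomorph.preimage_frontier, hhom, openBidisk_swap]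
      have hxf' : Prod.swap x ∈ frontier openBidisk := by
        rw [← Set.mem_preimage, hfr]
        exact hxf
      have := h2 ⟨hxc', hxf'⟩
      exact ⟨this.2, this.1⟩
    · intro f hf hyp
      obtain ⟨r, hr01, hrlim, hrbd⟩ := hyp
      set f' : ℂ × ℂ → ℂ := fun p => f (p.2, p.1) with hf'def
      have hswapdiff : Differentiable ℂ (fun p : ℂ × ℂ => (p.2, p.1)) :=
        differentiable_snd.prodMk differentiable_fst
      have hf' : DifferentiableOn ℂ f' openBidisk := by
        apply hf.comp hswapdiff.differentiableOn
        intro p hp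
        exact swap_mem_openBidisk.2 hp
      have hyp' : ∃ r : ℕ → ℝ, (∀ n, 0 < r n ∧ r n < 1) ∧ Tendsto r atTop (nhds 1) ∧
          ∀ n, ∀ z ∈ zeroSet q ∩ openBidisk,
            ‖f' ((r n : ℂ) * z.1, (r n : ℂ) * z.2)‖ ≤ 1 := by
        refine ⟨r, hr01, hrlim, fun n z hz => ?_⟩
        have hz' : (z.2, z.1) ∈ zeroSet (MvPolynomial.rename (Equiv.swap (0 : Fin 2) 1) q) ∩
            openBidisk := by
          constructor
          · rw [zeroSet_rename_swap]
            simpa using hz.1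
          · exact swap_mem_openBidisk.2 hz.2
        have := hrbd n (z.2, z.1) hz'
        simpa [hf'def] using this
      have := h3 f' hf' hyp'
      have he1 : f' (a.2, a.1) = f a := by simp [hf'def]
      have he2 : f' (b.2, b.1) = f b := by simp [hf'def]
      rw [he1, he2] at this
      refine this.trans (mul_le_mul_of_nonneg_right (le_max_right _ _) (norm_nonneg _))
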